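/- The functions I₁ = e^{f'} cos(g') + (1/2) ln(f² + g²) - e^{f'}(f' cos(g') - g' sin(g')) and I₂ = e^{f'} sin(g') + arctan(g/f) - e^{f'}(f' sin(g') + g' cos(g')) are first integrals of the system f f'' - g g'' = e^{-f'} cos(g'), f g'' + g f'' = -e^{-f'} sin(g'), i.e., dI₁/dx = 0 and dI₂/dx = 0 along every solution (f, g) of the system with f² + g² ≠ 0. -/

import Mathlib

open Real in
/-- First integrals of the system `f f'' - g g'' = e^{-f'} cos g'`,
`f g'' + g f'' = -e^{-f'} sin g'`. -/
theorem first_integrals_example1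
    (I : Set ℝ) (hI : IsOpen I) (f g f' g' f'' g'' : ℝ → ℝ)
    (hf : ∀ x, HasDerivAt f (f' x) x) (hf' : ∀ x, HasDerivAt f' (f'' x) x)
    (hg : ∀ x, HasDerivAt g (g' x) x) (hg' : ∀ x, HasDerivAt g' (g'' x) x)
    (hne : ∀ x ∈ I, f x ^ 2 + g x ^ 2 ≠ 0) (hfne : ∀ x ∈ I, f x ≠ 0)
    (ode1 : ∀ x ∈ I, f x * f'' x - g x * g'' x = exp (-f' x) * cos (g' x))
    (ode2 : ∀ x ∈ I, f x * g'' x + g x * f'' x = -exp (-f' x) * sin (g' x)) :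
    (∀ x ∈ I, deriv (fun t => exp (f' t) * cos (g' t) + (1/2) * Real.log (f t ^ 2 + g t ^ 2)
        - exp (f' t) * (f' t * cos (g' t) - g' t * sin (g' t))) x = 0) ∧
    (∀ x ∈ I, deriv (fun t => exp (f' t) * sin (g' t) + Real.arctan (g t / f t)
        - exp (f' t) * (f' t * sin (g' t) + g' t * cos (g' t))) x = 0) := by
  -- Solve the linear system for f'' and g''
  have key0 : ∀ x ∈ I,
      f'' x = exp (-f' x) * (f x * cos (g' x) - g x * sin (g' x)) / (f x ^ 2 + g x ^ 2) ∧
      g'' x = -(exp (-f' x) * (f x * sin (g' x) + g x * cos (g' x))) / (f x ^ 2 + g x ^ 2) := by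
    intro x hx
    have h1 := ode1 x hx
    have h2 := ode2 x hx
    have hD := hne x hx
    constructor
    · field_simp
      linear_combination f x * h1 + g x * h2
    · field_simp
      linear_combination f x * h2 - g x * h1
  -- The two basic identities
  have key : ∀ x ∈ I,
      exp (f' x) * (f'' x * cos (g' x) - g'' x * sin (g' x)) = f x / (f x ^ 2 + g x ^ 2) ∧
      exp (f' x) * (f'' x * sin (g' x) + g'' x * cos (g' x)) = -g x / (f x ^ 2 + g x ^ 2) := by
    intro x hx
    obtain ⟨h1, h2⟩ := key0 x hx
    have hD := hne x hx
    have hEx := Real.exp_ne_zero (f' x)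
    have ht := sin_sq_add_cos_sq (g' x)
    constructor
    · rw [h1, h2, Real.exp_neg]
      field_simp
      linear_combination (f x) * ht
    · rw [h1, h2, Real.exp_neg]
      field_simp
      linear_combination (-g x) * ht
  constructor
  · intro x hx
    obtain ⟨hA, hB⟩ := key x hx
    have hD := hne x hx
    have hE : HasDerivAt (fun t => exp (f' t)) (exp (f' x) * f'' x) x := (hf' x).exp
    have hc : HasDerivAt (fun t => cos (g' t)) (-sin (g' x) * g'' x) x := (hg' x).cos
    have hs : HasDerivAt (fun t => sin (g' t)) (cos (g' x) * g'' x) x := (hg' x).sin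
    have hL : HasDerivAt (fun t => Real.log (f t ^ 2 + g t ^ 2))
        ((2 * f x ^ (2-1) * f' x + 2 * g x ^ (2-1) * g' x) / (f x ^ 2 + g x ^ 2)) x :=
      (((hf x).pow 2).add ((hg x).pow 2)).log hD
    have H := ((hE.mul hc).add ((hasDerivAt_const x ((1:ℝ)/2)).mul hL)).sub
        (hE.mul (((hf' x).mul hc).sub ((hg' x).mul hs)))
    refine H.deriv.trans ?_
    simp only [Pi.mul_apply, Pi.sub_apply, Pi.add_apply]
    linear_combination (-(f' x)) * hA + (g' x) * hB
  · intro x hx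
    obtain ⟨hA, hB⟩ := key x hx
    have hD := hne x hx
    have hfx := hfne x hx
    have hE : HasDerivAt (fun t => exp (f' t)) (exp (f' x) * f'' x) x := (hf' x).exp
    have hc : HasDerivAt (fun t => cos (g' t)) (-sin (g' x) * g'' x) x := (hg' x).cos
    have hs : HasDerivAt (fun t => sin (g' t)) (cos (g' x) * g'' x) x := (hg' x).sin
    have hA' : HasDerivAt (fun t => Real.arctan (g t / f t))
        (1 / (1 + (g x / f x) ^ 2) * ((g' x * f x - g x * f' x) / (f x ^ 2))) x :=
      ((hg x).div (hf x) hfx).arctan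
    have harc : 1 / (1 + (g x / f x) ^ 2) * ((g' x * f x - g x * f' x) / (f x ^ 2))
        = (g' x * f x - g x * f' x) / (f x ^ 2 + g x ^ 2) := by
      field_simp
    rw [harc] at hA'
    have H := ((hE.mul hs).add hA').sub
        (hE.mul (((hf' x).mul hs).add ((hg' x).mul hc)))
    refine H.deriv.trans ?_
    simp only [Pi.mul_apply, Pi.sub_apply, Pi.add_apply]
    linear_combination (-(f' x)) * hB + (-(g' x)) * hA
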